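/- In the 'terminal' weight system (with t_{n-1}/y in place of 2t_{n-1}/y), assuming n ≥ 5: for any distinct i, j ∈ {3,…,n} there exists a prime p such that for all m ≥ 0, p divides λ_1^(m,a), λ_i^(m,a), and λ_j^(m,a), but p divides neither λ_0^(m,a) nor λ_2^(m,a). -/

import Mathlib

/-- `QDvd d q` means the rational number `q` is `d` times an integer. -/
def QDvd (d : ℕ) (q : ℚ) : Prop := ∃ c : ℤ, q = (d : ℚ) * c

/-- auxiliary linear recurrence -/
def wseq (A : ℤ) : ℕ → ℤ
  | 0 => 1
  | 1 => 1
  | m + 2 => (A + 2) * wseq A (m + 1) - wseq A m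

lemma wseq_step (A : ℤ) (m : ℕ) :
    wseq A (m + 2) = (A + 2) * wseq A (m + 1) - wseq A m := rfl

lemma wseq_pos (A : ℤ) (hA : 0 ≤ A) :
    ∀ m, 1 ≤ wseq A m ∧ wseq A m ≤ wseq A (m + 1)
  | 0 => ⟨le_refl 1, le_refl 1⟩
  | m + 1 => by
    obtain ⟨h1, h2⟩ := wseq_pos A hA m
    refine ⟨by linarith, ?_⟩
    rw [wseq_step]
    nlinarith

lemma wseq_rec (A : ℤ) :
    ∀ m, wseq A (m + 2) * wseq A m = wseq A (m + 1) ^ 2 + A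
  | 0 => by simp [wseq]; ring
  | m + 1 => by
    have ih := wseq_rec A m
    rw [wseq_step A (m + 1)]
    linear_combination ih - wseq A (m + 2) * wseq_step A m

lemma wseq_modeq (A : ℤ) (p : ℕ) (h : (p : ℤ) ∣ A) :
    ∀ m, wseq A m ≡ 1 [ZMOD p]
  | 0 => Int.ModEq.refl 1
  | 1 => Int.ModEq.refl 1
  | m + 2 => by
    have h1 := wseq_modeq A p h (m + 1)
    have h0 := wseq_modeq A p h m
    have hA : A ≡ 0 [ZMOD p] := (Int.modEq_zero_iff_dvd.mpr h)
    rw [wseq_step]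
    have := ((hA.add_right 2).mul h1).sub h0
    simpa using this

theorem terminal_lambda_exists_prime
    (n a : ℕ) (hn : 5 ≤ n) (ha : a ≤ n - 2)
    (y : ℕ → ℕ)
    (hy0 : y 0 = 2)
    (hy : ∀ m, 1 ≤ m → y m = 1 + ∏ i ∈ Finset.range m, y i)
    (k : ℕ → ℕ)
    (hk : Set.BijOn k (Set.Icc 3 n) (Set.Iic (n - 2) \ {a}))
    (L : ℕ → ℕ → ℚ)
    (hL00 : L 0 0 = 1)
    (hL01 : L 0 1 = ((y (n - 1) : ℚ) - 1) / (y a : ℚ))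
    (hL02 : L 0 2 = 1)
    (hL0i : ∀ i, 3 ≤ i → i ≤ n → L 0 i = ((y (n - 1) : ℚ) - 1) / (y (k i) : ℚ))
    (hR0 : ∀ m, L (m + 1) 0 = L m 2)
    (hR1 : ∀ m, L (m + 1) 1 = L m 1)
    (hR2 : ∀ m, L (m + 1) 2 = (L m 1 + L m 2) ^ 2 / L m 0)
    (hRi : ∀ m i, 3 ≤ i → i ≤ n → L (m + 1) i = L m i * (L m 1 + L m 2) / L m 0)
    : ∀ i j, 3 ≤ i → i ≤ n → 3 ≤ j → j ≤ n → i ≠ j →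
      ∃ p : ℕ, p.Prime ∧ ∀ m,
        QDvd p (L m 1) ∧ QDvd p (L m i) ∧ QDvd p (L m j) ∧
        ¬ QDvd p (L m 0) ∧ ¬ QDvd p (L m 2) := by
  intro i j hi3 hin hj3 hjn hne
  -- basic facts about y
  have hy2 : ∀ m, 2 ≤ y m := by
    intro m
    induction m using Nat.strong_induction_on with
    | _ m ih =>
      match m with
      | 0 => omega
      | m + 1 =>
        rw [hy (m + 1) (by omega)]
        have h1 : 1 ≤ ∏ c ∈ Finset.range (m + 1), y c :=
          Finset.one_le_prod' fun c hc => by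
            have := ih c (Finset.mem_range.mp hc); omega
        omega
  -- facts about k i, k j
  have hki := hk.mapsTo (show i ∈ Set.Icc 3 n by simp [Set.mem_Icc]; omega)
  have hkj := hk.mapsTo (show j ∈ Set.Icc 3 n by simp [Set.mem_Icc]; omega)
  simp only [Set.mem_diff, Set.mem_Iic, Set.mem_singleton_iff] at hki hkj
  have hkij : k i ≠ k j := by
    intro h
    exact hne (hk.injOn (by simp [Set.mem_Icc]; omega) (by simp [Set.mem_Icc]; omega) h)
  -- find b
  obtain ⟨b, hb⟩ : ((Finset.Iic (n - 2)) \ {a, k i, k j}).Nonempty := by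
    rw [← Finset.card_pos]
    have h1 : (Finset.Iic (n - 2)).card = n - 1 := by
      rw [Nat.card_Iic]; omega
    have h2 : ({a, k i, k j} : Finset ℕ).card ≤ 3 :=
      (Finset.card_insert_le _ _).trans (by
        have := Finset.card_insert_le (k i) ({k j} : Finset ℕ)
        simp at this ⊢; omega)
    have h3 := Finset.le_card_sdiff ({a, k i, k j} : Finset ℕ) (Finset.Iic (n - 2))
    omega
  simp only [Finset.mem_sdiff, Finset.mem_Iic, Finset.mem_insert,
    Finset.mem_singleton, not_or] at hb
  obtain ⟨hble, hba, hbi, hbj⟩ := hb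
  -- the prime
  have hyb : y b ≠ 1 := by have := hy2 b; omega
  set p := (y b).minFac with hpdef
  have hp : p.Prime := Nat.minFac_prime hyb
  have hpyb : p ∣ y b := Nat.minFac_dvd _
  refine ⟨p, hp, ?_⟩
  -- the integer products
  set A' : ℕ := ∏ c ∈ (Finset.range (n - 1)).erase a, y c with hA'
  set Bi : ℕ := ∏ c ∈ (Finset.range (n - 1)).erase (k i), y c with hBi
  set Bj : ℕ := ∏ c ∈ (Finset.range (n - 1)).erase (k j), y c with hBj
  have hsplit : ∀ c, c ≤ n - 2 →
      ((y (n - 1) : ℚ) - 1) / (y c : ℚ)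
        = ((∏ d ∈ (Finset.range (n - 1)).erase c, y d : ℕ) : ℚ) := by
    intro c hc
    have hmem : c ∈ Finset.range (n - 1) := Finset.mem_range.mpr (by omega)
    have h : y (n - 1) = 1 + y c * ∏ d ∈ (Finset.range (n - 1)).erase c, y d := by
      rw [hy (n - 1) (by omega), Finset.mul_prod_erase _ _ hmem]
    have hyc : (y c : ℚ) ≠ 0 := by
      have := hy2 c
      exact_mod_cast (by omega : y c ≠ 0)
    rw [div_eq_iff hyc, h]
    push_cast
    ring
  have hL01' : L 0 1 = (A' : ℚ) := by rw [hL01, hsplit a ha]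
  have hL0i' : L 0 i = (Bi : ℚ) := by rw [hL0i i hi3 hin, hsplit (k i) hki.1]
  have hL0j' : L 0 j = (Bj : ℚ) := by rw [hL0i j hj3 hjn, hsplit (k j) hkj.1]
  -- divisibilities
  have hpA : p ∣ A' := hpyb.trans (Finset.dvd_prod_of_mem y
    (by simp [Finset.mem_erase]; omega))
  have hpBi : p ∣ Bi := hpyb.trans (Finset.dvd_prod_of_mem y
    (by simp [Finset.mem_erase]; omega))
  have hpBj : p ∣ Bj := hpyb.trans (Finset.dvd_prod_of_mem y
    (by simp [Finset.mem_erase]; omega))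
  -- the sequence
  set w : ℕ → ℤ := wseq (A' : ℤ) with hw
  have hA0 : (0 : ℤ) ≤ (A' : ℤ) := Int.natCast_nonneg _
  have hwpos : ∀ m, 1 ≤ w m := fun m => (wseq_pos (A' : ℤ) hA0 m).1
  have hwne : ∀ m, ((w m : ℤ) : ℚ) ≠ 0 := by
    intro m
    have := hwpos m
    exact_mod_cast (by omega : w m ≠ 0)
  have hwrec : ∀ m, w (m + 2) * w m = w (m + 1) ^ 2 + (A' : ℤ) := wseq_rec _
  -- closed form
  have key : ∀ m, L m 0 = ((w m : ℤ) : ℚ) ^ 2 ∧ L m 1 = (A' : ℚ) ∧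
      L m 2 = ((w (m + 1) : ℤ) : ℚ) ^ 2 ∧
      L m i = (Bi : ℚ) * ((w (m + 1) : ℤ) : ℚ) * ((w m : ℤ) : ℚ) ∧
      L m j = (Bj : ℚ) * ((w (m + 1) : ℤ) : ℚ) * ((w m : ℤ) : ℚ) := by
    intro m
    induction m with
    | zero =>
      have h0 : w 0 = 1 := rfl
      have h1 : w 1 = 1 := rfl
      refine ⟨by rw [hL00, h0]; norm_num, hL01', by rw [hL02, h1]; norm_num,
        by rw [hL0i', h0, h1]; push_cast; ring,
        by rw [hL0j', h0, h1]; push_cast; ring⟩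
    | succ m ih =>
      obtain ⟨ih0, ih1, ih2, ihi, ihj⟩ := ih
      have hrecq : ((w (m + 2) : ℤ) : ℚ) * ((w m : ℤ) : ℚ)
          = ((w (m + 1) : ℤ) : ℚ) ^ 2 + (A' : ℚ) := by
        exact_mod_cast congrArg (fun z : ℤ => (z : ℚ)) (hwrec m)
      refine ⟨by rw [hR0, ih2], by rw [hR1, ih1], ?_, ?_, ?_⟩
      · rw [hR2, ih0, ih1, ih2, div_eq_iff (pow_ne_zero 2 (hwne m))]
        linear_combination (-( (A' : ℚ) + ((w (m + 1) : ℤ) : ℚ) ^ 2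
          + ((w (m + 2) : ℤ) : ℚ) * ((w m : ℤ) : ℚ))) * hrecq
      · rw [hRi m i hi3 hin, ih0, ih1, ih2, ihi,
          div_eq_iff (pow_ne_zero 2 (hwne m))]
        linear_combination (-((Bi : ℚ) * ((w (m + 1) : ℤ) : ℚ)
          * ((w m : ℤ) : ℚ))) * hrecq
      · rw [hRi m j hj3 hjn, ih0, ih1, ih2, ihj,
          div_eq_iff (pow_ne_zero 2 (hwne m))]
        linear_combination (-((Bj : ℚ) * ((w (m + 1) : ℤ) : ℚ)
          * ((w m : ℤ) : ℚ))) * hrecq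
  -- mod p facts about w
  have hpA' : ((p : ℕ) : ℤ) ∣ (A' : ℤ) := Int.natCast_dvd_natCast.mpr hpA
  have hwmod : ∀ m, ¬ ((p : ℤ) ∣ w m) := by
    intro m hdvd
    have h1 := wseq_modeq (A' : ℤ) p hpA' m
    have := (dvd_add h1.dvd hdvd)
    simp only [hw, sub_add_cancel] at this
    have h2 : (p : ℤ) ≤ 1 := Int.le_of_dvd one_pos this
    have := hp.two_le
    omega
  have hndvd_sq : ∀ m, ¬ QDvd p (((w m : ℤ) : ℚ) ^ 2) := by
    rintro m ⟨c, hc⟩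
    have hc' : (w m) ^ 2 = (p : ℤ) * c := by exact_mod_cast hc
    have : (p : ℤ) ∣ w m :=
      (Nat.prime_iff_prime_int.mp hp).dvd_of_dvd_pow (n := 2) ⟨c, hc'⟩
    exact hwmod m this
  intro m
  obtain ⟨h0, h1, h2, h3i, h3j⟩ := key m
  obtain ⟨cA, hcA⟩ := hpA
  obtain ⟨cBi, hcBi⟩ := hpBi
  obtain ⟨cBj, hcBj⟩ := hpBj
  refine ⟨⟨cA, by rw [h1, hcA]; push_cast; ring⟩,
    ⟨cBi * w (m + 1) * w m, by rw [h3i, hcBi]; push_cast; ring⟩,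
    ⟨cBj * w (m + 1) * w m, by rw [h3j, hcBj]; push_cast; ring⟩,
    by rw [h0]; exact hndvd_sq m,
    by rw [h2]; exact hndvd_sq (m + 1)⟩
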